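/- Suppose q ≠ 1. Let α ∈ K be nonzero, let s ≥ 1, and fix Jordan chains (Ψ_{α,r})_{r≥1} at α and (Ψ_{α/q,r})_{r≥1} at α/q. Then D_q Ψ_{α,s} − (q^{2−s}/(α(q−1))) Ψ_{α/q,s} lies in the K-linear span of {Ψ_{α/q,r} : 1 ≤ r < s} ∪ {Ψ_{α,r} : 1 ≤ r ≤ s}. -/

import Mathlib

open Polynomial
open scoped Classical

noncomputable section

/-- The q-integer {n}_q. -/
def qInt (K : Type*) [Field K] (q : K) (n : ℤ) : K :=
  if q = 1 then (n : K) else (q ^ n - 1) / (q - 1)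

/-- The multiplication operator `M` on formal Laurent series `L = ℤ → K`:
`(M a)(n) = a(n-1)`. -/
def Mop (K : Type*) [Field K] : Module.End K (ℤ → K) where
  toFun a := fun n => a (n - 1)
  map_add' _ _ := rfl
  map_smul' _ _ := rfl

/-- The q-difference operator `D_q` on `L = ℤ → K`: `(D_q a)(n) = {n+1}_q · a(n+1)`. -/
def Dq (K : Type*) [Field K] (q : K) : Module.End K (ℤ → K) where
  toFun a := fun n => qInt K q (n + 1) * a (n + 1)
  map_add' x y := by funext n; simp [Pi.add_apply, mul_add]
  map_smul' c x := by funext n; simp [Pi.smul_apply, smul_eq_mul]; ring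

/-- The element `Ψ_{α,1} ∈ L`, `Ψ_{α,1}(n) = α^{-n}`. -/
def Psi1 (K : Type*) [Field K] (α : K) : ℤ → K := fun n => α ^ (-n)

/-- A Jordan chain at `α`: a sequence `(Ψ_{α,s})_{s ≥ 1}` with first term `Ψ_{α,1}`
and `(M - α·id) Ψ_{α,s} = Ψ_{α,s-1}` for `s ≥ 2`. -/
def IsJordanChain (K : Type*) [Field K] (α : K) (Ψ : ℕ → ℤ → K) : Prop :=
  Ψ 1 = Psi1 K α ∧ ∀ s : ℕ, 2 ≤ s → Mop K (Ψ s) - α • Ψ s = Ψ (s - 1)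

section AuxLemmas

variable {K : Type*} [Field K]

lemma qInt_succ (q : K) (hq : q ≠ 0) (n : ℤ) : qInt K q (n + 1) = q * qInt K q n + 1 := by
  unfold qInt
  split_ifs with h
  · subst h; push_cast; ring
  · have h1 : q - 1 ≠ 0 := sub_ne_zero.mpr h
    rw [zpow_add₀ hq, zpow_one]
    field_simp
    ring

lemma mop_psi1 (α : K) (hα : α ≠ 0) : Mop K (Psi1 K α) = α • Psi1 K α := by
  funext n
  simp only [Mop, LinearMap.coe_mk, AddHom.coe_mk, Psi1, Pi.smul_apply, smul_eq_mul]
  rw [show -(n-1) = 1 + -n by ring, zpow_add₀ hα, zpow_one]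

lemma dq_mop (q : K) (hq : q ≠ 0) (a : ℤ → K) :
    Dq K q (Mop K a) = q • (Mop K (Dq K q a)) + a := by
  funext n
  simp only [Dq, Mop, LinearMap.coe_mk, AddHom.coe_mk, Pi.add_apply, Pi.smul_apply,
    smul_eq_mul, add_sub_cancel_right, sub_add_cancel]
  rw [qInt_succ q hq n]
  ring

lemma ker_T (β : K) (hβ : β ≠ 0) (a : ℤ → K) (h : Mop K a - β • a = 0) :
    a = a 0 • Psi1 K β := by
  have key : ∀ n : ℤ, a (n - 1) = β * a n := by
    intro n
    have := congrFun h n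
    simp only [Pi.sub_apply, Pi.smul_apply, smul_eq_mul, Mop, LinearMap.coe_mk, AddHom.coe_mk,
      Pi.zero_apply] at this
    linear_combination this
  funext n
  simp only [Pi.smul_apply, smul_eq_mul, Psi1]
  induction n using Int.induction_on with
  | zero => simp
  | succ k ih =>
    have := key (k + 1)
    have hk : ((k:ℤ) + 1 - 1) = k := by ring
    rw [hk] at this
    have h2 : a (k+1) = β⁻¹ * a k := by field_simp; linear_combination -this
    rw [h2, ih, show (-((k:ℤ)+1)) = -k + -1 by ring, zpow_add₀ hβ, zpow_neg_one]
    ring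
  | pred k ih =>
    have := key (-k)
    rw [show (-(k:ℤ) - 1) = -k-1 from rfl] at this
    rw [this, ih, show (-(-(k:ℤ)-1)) = -(-k) + 1 by ring, zpow_add₀ hβ, zpow_one]
    ring

lemma T_apply (β : K) (a : ℤ → K) :
    (Mop K - β • (1 : Module.End K (ℤ → K))) a = Mop K a - β • a := by
  simp [LinearMap.sub_apply, LinearMap.smul_apply, Module.End.one_apply]

lemma lift_psi (α β : K) (hab : α - β ≠ 0) (Ψ : ℕ → ℤ → K)
    (h0 : Mop K (Ψ 1) - α • Ψ 1 = 0)
    (hch : ∀ s : ℕ, 2 ≤ s → Mop K (Ψ s) - α • Ψ s = Ψ (s - 1)) :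
    ∀ r : ℕ, 1 ≤ r → Ψ r ∈ Submodule.map (Mop K - β • (1 : Module.End K (ℤ → K)))
      (Submodule.span K (Ψ '' {r' : ℕ | 1 ≤ r' ∧ r' ≤ r})) := by
  intro r hr
  induction r, hr using Nat.le_induction with
  | base =>
    refine ⟨(α - β)⁻¹ • Ψ 1, Submodule.smul_mem _ _ (Submodule.subset_span ⟨1, ⟨le_refl 1, le_refl 1⟩, rfl⟩), ?_⟩
    rw [map_smul, T_apply]
    have : Mop K (Ψ 1) - β • Ψ 1 = (α - β) • Ψ 1 := by
      have := h0
      rw [sub_smul]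
      rw [sub_eq_zero] at this
      rw [this]
    rw [this, smul_smul, inv_mul_cancel₀ hab, one_smul]
  | succ r hr ih =>
    obtain ⟨x, hx, hTx⟩ := ih
    have hxmem : x ∈ Submodule.span K (Ψ '' {r' : ℕ | 1 ≤ r' ∧ r' ≤ r + 1}) := by
      refine Submodule.span_mono ?_ hx
      rintro y ⟨r', ⟨h1', h2'⟩, rfl⟩; exact ⟨r', ⟨h1', by omega⟩, rfl⟩
    have hT : (Mop K - β • (1 : Module.End K (ℤ → K))) (Ψ (r+1)) = Ψ r + (α - β) • Ψ (r+1) := by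
      rw [T_apply]
      have h := hch (r+1) (by omega)
      simp only [Nat.add_sub_cancel] at h
      rw [sub_smul]
      rw [sub_eq_iff_eq_add] at h
      rw [h]; abel
    refine ⟨(α - β)⁻¹ • (Ψ (r+1) - x),
      Submodule.smul_mem _ _ (Submodule.sub_mem _ (Submodule.subset_span ⟨r+1, ⟨by omega, le_refl _⟩, rfl⟩) hxmem), ?_⟩
    rw [map_smul, map_sub, hT, hTx]
    rw [show Ψ r + (α - β) • Ψ (r+1) - Ψ r = (α - β) • Ψ (r+1) by abel]
    rw [smul_smul, inv_mul_cancel₀ hab, one_smul]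

lemma base_case (q α : K) (hq : q ≠ 0) (hq1 : q ≠ 1) (hα : α ≠ 0) :
    Dq K q (Psi1 K α) - (q / (α * (q - 1))) • Psi1 K (α / q)
      = (-(α * (q - 1))⁻¹) • Psi1 K α := by
  have h1 : q - 1 ≠ 0 := sub_ne_zero.mpr hq1
  funext n
  simp only [Dq, LinearMap.coe_mk, AddHom.coe_mk, Pi.sub_apply, Pi.smul_apply, smul_eq_mul,
    Psi1, qInt, if_neg hq1, div_zpow]
  rw [zpow_neg, zpow_neg, zpow_neg, zpow_add₀ hq, zpow_one, zpow_add₀ hα, zpow_one]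
  have hqn : (q:K) ^ n ≠ 0 := zpow_ne_zero n hq
  have hαn : (α:K) ^ n ≠ 0 := zpow_ne_zero n hα
  field_simp
  ring

lemma step_identity (q α : K) (hq : q ≠ 0) (A A' B B' : ℤ → K)
    (hA : Mop K A - α • A = A')
    (hB : Mop K B - (α / q) • B = B')
    (c c' : K) (hc : q * c = c') :
    (Mop K - (α / q) • (1 : Module.End K (ℤ → K))) (Dq K q A - c • B)
      = q⁻¹ • (Dq K q A' - c' • B') - q⁻¹ • A := by
  have hA' : Mop K A = A' + α • A := by rw [← hA]; abel
  have h := dq_mop q hq A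
  rw [hA', map_add, map_smul] at h
  funext n
  have hn := congrFun h n
  have hBn := congrFun hB n
  rw [T_apply, map_sub, map_smul]
  simp only [Pi.add_apply, Pi.sub_apply, Pi.smul_apply, smul_eq_mul, Mop,
    LinearMap.coe_mk, AddHom.coe_mk] at hn hBn ⊢
  field_simp at hBn ⊢
  linear_combination -hn - c * hBn - B' n * hc

end AuxLemmas

/-- for `q ≠ 1`, `D_q Ψ_{α,s} − (q^{2−s}/(α(q−1))) Ψ_{α/q,s}` lies in the
span of `{Ψ_{α/q,r} : 1 ≤ r < s} ∪ {Ψ_{α,r} : 1 ≤ r ≤ s}`. -/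
theorem Dq_Psi_s (K : Type*) [Field K] (q : K) (hq : q ≠ 0) (hq1 : q ≠ 1)
    (hqi : ∀ n : ℤ, n ≠ 0 → qInt K q n ≠ 0)
    (α : K) (hα : α ≠ 0) (s : ℕ) (hs : 1 ≤ s)
    (Ψa Ψaq : ℕ → ℤ → K)
    (h1 : IsJordanChain K α Ψa) (h2 : IsJordanChain K (α / q) Ψaq) :
    Dq K q (Ψa s) - (q ^ ((2 : ℤ) - (s : ℤ)) / (α * (q - 1))) • Ψaq s ∈
      Submodule.span K
        ((Ψaq '' {r : ℕ | 1 ≤ r ∧ r < s}) ∪ (Ψa '' {r : ℕ | 1 ≤ r ∧ r ≤ s})) := by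
  have hβ : α / q ≠ 0 := div_ne_zero hα hq
  have hq1' : q - 1 ≠ 0 := sub_ne_zero.mpr hq1
  have hab : α - α / q ≠ 0 := by
    have he : α - α / q = α * (q - 1) / q := by field_simp
    rw [he]; exact div_ne_zero (mul_ne_zero hα hq1') hq
  have h0 : Mop K (Ψa 1) - α • Ψa 1 = 0 := by
    rw [h1.1, mop_psi1 α hα, sub_self]
  induction s, hs using Nat.le_induction with
  | base =>
    have hco : (q ^ ((2 : ℤ) - ((1:ℕ) : ℤ)) / (α * (q - 1))) = q / (α * (q - 1)) := by
      norm_num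
    rw [hco, h1.1, h2.1, base_case q α hq hq1 hα]
    refine Submodule.smul_mem _ _ (Submodule.subset_span (Or.inr ⟨1, ⟨le_refl 1, le_refl 1⟩, ?_⟩))
    exact h1.1
  | succ s hs ih =>
    set c : ℕ → K := fun m => q ^ ((2 : ℤ) - (m : ℤ)) / (α * (q - 1)) with hcdef
    have hc : q * c (s + 1) = c s := by
      simp only [hcdef]
      rw [show ((2 : ℤ) - ((s + 1 : ℕ) : ℤ)) = ((2 : ℤ) - (s : ℤ)) - 1 by push_cast; ring,
        zpow_sub₀ hq, zpow_one]
      field_simp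
    have hA : Mop K (Ψa (s + 1)) - α • Ψa (s + 1) = Ψa s := by
      have h := h1.2 (s + 1) (by omega); simpa using h
    have hB : Mop K (Ψaq (s + 1)) - (α / q) • Ψaq (s + 1) = Ψaq s := by
      have h := h2.2 (s + 1) (by omega); simpa using h
    have hTE := step_identity q α hq (Ψa (s + 1)) (Ψa s) (Ψaq (s + 1)) (Ψaq s) hA hB
      (c (s + 1)) (c s) hc
    set T : Module.End K (ℤ → K) := Mop K - (α / q) • (1 : Module.End K (ℤ → K)) with hTdef
    set E : ℤ → K := Dq K q (Ψa (s + 1)) - c (s + 1) • Ψaq (s + 1) with hEdef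
    set W : Submodule K (ℤ → K) := Submodule.span K
      ((Ψaq '' {r : ℕ | 1 ≤ r ∧ r < s + 1}) ∪ (Ψa '' {r : ℕ | 1 ≤ r ∧ r ≤ s + 1})) with hWdef
    have hmem : T E ∈ Submodule.map T W := by
      rw [hEdef, hTE]
      have hspan : q⁻¹ • (Dq K q (Ψa s) - c s • Ψaq s) - q⁻¹ • Ψa (s + 1) ∈
          Submodule.span K
            ((Ψaq '' {r : ℕ | 1 ≤ r ∧ r < s}) ∪ (Ψa '' {r : ℕ | 1 ≤ r ∧ r ≤ s + 1})) := by
        refine Submodule.sub_mem _ (Submodule.smul_mem _ _ ?_) (Submodule.smul_mem _ _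
          (Submodule.subset_span (Or.inr ⟨s + 1, ⟨by omega, le_refl _⟩, rfl⟩)))
        refine Submodule.span_mono ?_ ih
        rintro y (⟨r, ⟨hr1, hr2⟩, rfl⟩ | ⟨r, ⟨hr1, hr2⟩, rfl⟩)
        · exact Or.inl ⟨r, ⟨hr1, hr2⟩, rfl⟩
        · exact Or.inr ⟨r, ⟨hr1, by omega⟩, rfl⟩
      refine Submodule.span_le.mpr ?_ hspan
      rintro x (⟨r, ⟨hr1, hr2⟩, rfl⟩ | ⟨r, ⟨hr1, hr2⟩, rfl⟩)
      · -- Ψaq r with r < s : preimage Ψaq (r+1)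
        have hr' := h2.2 (r + 1) (by omega)
        simp only [Nat.add_sub_cancel] at hr'
        exact ⟨Ψaq (r + 1),
          Submodule.subset_span (Or.inl ⟨r + 1, ⟨by omega, by omega⟩, rfl⟩),
          by rw [hTdef, T_apply]; exact hr'⟩
      · -- Ψa r with r ≤ s + 1
        have hl := lift_psi α (α / q) hab Ψa h0 h1.2 r hr1
        refine Submodule.map_mono (Submodule.span_le.mpr ?_) hl
        rintro y ⟨r', ⟨hr1', hr2'⟩, rfl⟩
        exact Submodule.subset_span (Or.inr ⟨r', ⟨hr1', by omega⟩, rfl⟩)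
    obtain ⟨w, hw, hTw⟩ := hmem
    have hker : Mop K (E - w) - (α / q) • (E - w) = 0 := by
      rw [← T_apply (α / q) (E - w), ← hTdef, map_sub, hTw, sub_self]
    have hEw : E - w = (E - w) 0 • Psi1 K (α / q) := ker_T (α / q) hβ _ hker
    have hmem2 : E ∈ W := by
      have h3 : E - w ∈ W := by
        rw [hEw, ← h2.1]
        exact Submodule.smul_mem _ _ (Submodule.subset_span (Or.inl ⟨1, ⟨le_refl 1, by omega⟩, rfl⟩))
      have h4 := Submodule.add_mem _ hw h3
      simpa using h4
    exact hmem2
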